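/- Let L > 0 and κ = 2π/L. Let s : ℝ → ℝ be continuous and L-periodic with mean ⟨s⟩ = (1/L)∫₀^L s(x) dx ≤ 0, let s₀ = max_{x∈[0,L]} s(x), write δs = s − ⟨s⟩, and assume s₀ ≤ κ² and ∫₀^L δs(x)² dx ≤ (κ² − s₀)·|⟨s⟩|. Then for every continuously differentiable L-periodic v : ℝ → ℂ with ∫₀^L v(x) dx = 0, we have |∫₀^L δs(x)·v(x) dx|² ≤ ( -∫₀^L s(x)·|v(x)|² dx + ∫₀^L |v'(x)|² dx )·|⟨s⟩|. -/

import Mathlib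

open MeasureTheory Complex intervalIntegral


lemma myCS {L : ℝ} (hL : 0 ≤ L) (φ : ℝ → ℝ) (v : ℝ → ℂ)
    (hφ : Continuous φ) (hv : Continuous v) :
    ‖∫ x in (0:ℝ)..L, (φ x : ℂ) * v x‖ ^ 2 ≤
      (∫ x in (0:ℝ)..L, (φ x) ^ 2) * (∫ x in (0:ℝ)..L, ‖v x‖ ^ 2) := by
  set B : ℂ := ∫ x in (0:ℝ)..L, (φ x : ℂ) * v x with hB
  set A : ℝ := ∫ x in (0:ℝ)..L, (φ x) ^ 2 with hA
  set C : ℝ := ∫ x in (0:ℝ)..L, ‖v x‖ ^ 2 with hC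
  have hA0 : 0 ≤ A := intervalIntegral.integral_nonneg hL (fun u _ => sq_nonneg _)
  have hC0 : 0 ≤ C := intervalIntegral.integral_nonneg hL (fun u _ => sq_nonneg _)
  by_cases hB0 : B = 0
  · rw [hB0]; simpa using mul_nonneg hA0 hC0
  have hBnorm : (0:ℝ) < ‖B‖ := norm_pos_iff.mpr hB0
  set w : ℂ := (starRingEnd ℂ) B / ‖B‖ with hw
  have hwB : (w * B).re = ‖B‖ := by
    have : w * B = ((Complex.normSq B / ‖B‖ : ℝ) : ℂ) := by
      rw [hw, div_mul_eq_mul_div, mul_comm, Complex.mul_conj]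
      push_cast
      ring
    rw [this, Complex.ofReal_re, Complex.normSq_eq_norm_sq,
      sq, mul_div_assoc, div_self hBnorm.ne', mul_one]
  have hwnorm : ‖w‖ = 1 := by
    rw [hw, norm_div, RCLike.norm_conj, Complex.norm_real,
      Real.norm_of_nonneg hBnorm.le, div_self hBnorm.ne']
  -- integrability
  have hint1 : IntervalIntegrable (fun x => (φ x : ℂ) * v x) volume 0 L :=
    (Continuous.mul (by continuity) hv).intervalIntegrable 0 L
  -- key quadratic inequality
  have key : ∀ t : ℝ, 0 ≤ A * (t * t) + (-2 * ‖B‖) * t + C := by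
    intro t
    have h1 : (0:ℝ) ≤ ∫ x in (0:ℝ)..L, ‖(t : ℂ) * (φ x : ℂ) - w * v x‖ ^ 2 :=
      intervalIntegral.integral_nonneg hL (fun u _ => sq_nonneg _)
    have expand : ∀ x : ℝ, ‖(t : ℂ) * (φ x : ℂ) - w * v x‖ ^ 2
        = (t * t) * (φ x) ^ 2 - 2 * t * (φ x * ((w * v x).re)) + ‖v x‖ ^ 2 := by
      intro x
      rw [← Complex.normSq_eq_norm_sq ((t : ℂ) * (φ x : ℂ) - w * v x), Complex.normSq_sub]
      have e1 : Complex.normSq ((t : ℂ) * (φ x : ℂ)) = (t * t) * (φ x)^2 := by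
        rw [Complex.normSq_mul, Complex.normSq_ofReal, Complex.normSq_ofReal]; ring
      have e2 : Complex.normSq (w * v x) = ‖v x‖ ^ 2 := by
        rw [Complex.normSq_mul, Complex.normSq_eq_norm_sq, Complex.normSq_eq_norm_sq,
          hwnorm, one_pow, one_mul]
      have e3 : ((t : ℂ) * (φ x : ℂ) * (starRingEnd ℂ) (w * v x)).re
          = t * (φ x * ((w * v x).re)) := by
        rw [← Complex.ofReal_mul, Complex.re_ofReal_mul, Complex.conj_re]
        ring
      rw [e1, e2, e3]; ring
    rw [intervalIntegral.integral_congr (fun x _ => expand x)] at h1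
    have hi1 : IntervalIntegrable (fun x => (t*t) * (φ x)^2) volume 0 L :=
      (Continuous.mul continuous_const (hφ.pow 2)).intervalIntegrable 0 L
    have hi2 : IntervalIntegrable (fun x => 2 * t * (φ x * ((w * v x).re))) volume 0 L := by
      apply Continuous.intervalIntegrable
      exact continuous_const.mul (hφ.mul ((Complex.continuous_re.comp (continuous_const.mul hv))))
    have hi3 : IntervalIntegrable (fun x => ‖v x‖^2) volume 0 L :=
      ((hv.norm).pow 2).intervalIntegrable 0 L
    rw [intervalIntegral.integral_add (hi1.sub hi2) hi3, intervalIntegral.integral_sub hi1 hi2,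
      intervalIntegral.integral_const_mul, intervalIntegral.integral_const_mul] at h1
    have cross : (∫ x in (0:ℝ)..L, φ x * ((w * v x).re)) = ‖B‖ := by
      have comm : (∫ x in (0:ℝ)..L, Complex.reCLM (w * ((φ x : ℂ) * v x)))
          = Complex.reCLM (∫ x in (0:ℝ)..L, w * ((φ x : ℂ) * v x)) :=
        ContinuousLinearMap.intervalIntegral_comp_comm Complex.reCLM
          (hint1.const_mul w)
      have eL : ∀ x : ℝ, Complex.reCLM (w * ((φ x : ℂ) * v x)) = φ x * ((w * v x).re) := by
        intro x
        simp only [Complex.reCLM_apply]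
        have : w * ((φ x : ℂ) * v x) = (φ x : ℂ) * (w * v x) := by ring
        rw [this, Complex.re_ofReal_mul]
      rw [intervalIntegral.integral_congr (fun x _ => eL x)] at comm
      rw [comm, intervalIntegral.integral_const_mul, ← hB]
      simpa using hwB
    rw [cross] at h1
    rw [← hA, ← hC] at h1
    linarith
  have := discrim_le_zero key
  rw [discrim] at this
  have h2 : ‖B‖^2 * 4 ≤ 4 * A * C := by nlinarith
  nlinarith


lemma wirtinger {L : ℝ} (hL : 0 < L) (v : ℝ → ℂ) (hv : ContDiff ℝ 1 v)
    (hper : ∀ x, v (x + L) = v x) (hmean : (∫ x in (0:ℝ)..L, v x) = 0) :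
    (2 * Real.pi / L) ^ 2 * ∫ x in (0:ℝ)..L, ‖v x‖ ^ 2 ≤ ∫ x in (0:ℝ)..L, ‖deriv v x‖ ^ 2 := by
  haveI : Fact (0 < L) := ⟨hL⟩
  have hvc : Continuous v := hv.continuous
  have hv'c : Continuous (deriv v) := hv.continuous_deriv le_rfl
  have hP : Function.Periodic v L := hper
  have hP' : Function.Periodic (deriv v) L := by
    intro x
    have : (fun y => v (y + L)) = v := funext hper
    rw [← deriv_comp_add_const v L x, this]
  -- continuous lifts to the circle
  have hgc : Continuous (hP.lift) := hvc.quotient_liftOn' _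
  have hg'c : Continuous (hP'.lift) := hv'c.quotient_liftOn' _
  set G : C(AddCircle L, ℂ) := ⟨hP.lift, hgc⟩ with hG
  set G' : C(AddCircle L, ℂ) := ⟨hP'.lift, hg'c⟩ with hG'
  -- bridge : fourierCoeff G n = fourierCoeffOn hL v n (and same for G')
  have bridge : ∀ (f : ℝ → ℂ) (hPf : Function.Periodic f L) (hfc : Continuous (hPf.lift)) (n : ℤ),
      fourierCoeff (hPf.lift) n = fourierCoeffOn hL f n := by
    intro f hPf hfc n
    rw [fourierCoeff_eq_intervalIntegral _ n 0, fourierCoeffOn_eq_integral]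
    simp only [zero_add, fourier_coe_apply, sub_zero, hPf.lift_coe]
  -- zeroth coefficient vanishes
  have hc0 : fourierCoeffOn hL v 0 = 0 := by
    simp only [fourierCoeffOn_eq_integral, neg_zero, fourier_zero, one_smul, hmean, smul_zero]
  -- derivative relation
  have hvL : v L - v 0 = 0 := by
    have := hper 0; rw [zero_add] at this; rw [this, sub_self]
  have hrel : ∀ n : ℤ, n ≠ 0 → fourierCoeffOn hL v n =
      1 / (-2 * Real.pi * I * n) * (-((L : ℂ) - 0) * fourierCoeffOn hL (deriv v) n) := by
    intro n hn
    have h := fourierCoeffOn_of_hasDerivAt hL hn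
      (f := v) (f' := deriv v)
      (fun x _ => (hv.differentiable one_ne_zero x).hasDerivAt)
      (hv'c.intervalIntegrable 0 L)
    rw [hvL, mul_zero, zero_sub] at h
    rw [h]
    push_cast
    ring
  -- coefficient-wise inequality
  have hπ : (0:ℝ) < Real.pi := Real.pi_pos
  have coeffineq : ∀ n : ℤ,
      (2 * Real.pi / L) * ‖fourierCoeffOn hL v n‖ ≤ ‖fourierCoeffOn hL (deriv v) n‖ := by
    intro n
    rcases eq_or_ne n 0 with rfl | hn
    · rw [hc0, norm_zero, mul_zero]; exact norm_nonneg _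
    · have hn1 : (1:ℝ) ≤ |(n:ℝ)| := by
        rw [← Int.cast_abs]
        exact_mod_cast Int.one_le_abs (by exact_mod_cast hn)
      have h1 : ‖fourierCoeffOn hL v n‖
          = 1 / (2 * Real.pi * |(n:ℝ)|) * (L * ‖fourierCoeffOn hL (deriv v) n‖) := by
        rw [hrel n hn, norm_mul, norm_mul, norm_div, norm_one]
        have e1 : ‖(-2 : ℂ) * (Real.pi : ℂ) * I * (n : ℂ)‖ = 2 * Real.pi * |(n:ℝ)| := by
          simp [norm_mul, Complex.norm_I, norm_neg, Complex.norm_ofNat,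
            Complex.norm_real, Real.norm_eq_abs, abs_of_pos hπ,
            Complex.norm_intCast, Int.norm_eq_abs, Int.cast_abs]
        have e2 : ‖-((L:ℂ) - 0)‖ = L := by
          rw [sub_zero, norm_neg, Complex.norm_real, Real.norm_eq_abs, abs_of_pos hL]
        rw [e1, e2]
      rw [h1]
      have habs : (0:ℝ) < |(n:ℝ)| := abs_pos.mpr (Int.cast_ne_zero.mpr hn)
      have hDnn : (0:ℝ) ≤ ‖fourierCoeffOn hL (deriv v) n‖ := norm_nonneg _
      have heq : 2 * Real.pi / L * (1 / (2 * Real.pi * |(n:ℝ)|) *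
          (L * ‖fourierCoeffOn hL (deriv v) n‖))
          = ‖fourierCoeffOn hL (deriv v) n‖ / |(n:ℝ)| := by
        field_simp
      rw [heq]
      exact div_le_self hDnn hn1
  -- Parseval for a continuous function on the circle
  have pars : ∀ F : C(AddCircle L, ℂ),
      (∑' n : ℤ, ‖fourierCoeff (⇑F) n‖ ^ 2 = ∫ t, ‖F t‖ ^ 2 ∂AddCircle.haarAddCircle) ∧
      Summable (fun n : ℤ => ‖fourierCoeff (⇑F) n‖ ^ 2) := by
    intro F
    set Fl := ContinuousMap.toLp (E := ℂ) 2 AddCircle.haarAddCircle ℂ F with hFl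
    have hcoeff : ∀ n : ℤ, fourierCoeff (Fl : AddCircle L → ℂ) n = fourierCoeff (⇑F) n :=
      fourierCoeff_toLp F
    constructor
    · have h := tsum_sq_fourierCoeff Fl
      simp_rw [hcoeff] at h
      rw [h]
      apply MeasureTheory.integral_congr_ae
      filter_upwards [ContinuousMap.coeFn_toLp (p := 2) (μ := AddCircle.haarAddCircle) (𝕜 := ℂ) F] with t ht
      rw [ht]
    · have hm : Memℓp (fun n : ℤ => fourierBasis.repr Fl n) 2 := (fourierBasis.repr Fl).2
      have hs := hm.summable (by norm_num : (0:ℝ) < (2 : ENNReal).toReal)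
      have : (fun n : ℤ => ‖fourierBasis.repr Fl n‖ ^ (2 : ENNReal).toReal)
          = fun n : ℤ => ‖fourierCoeff (⇑F) n‖ ^ 2 := by
        funext n
        rw [fourierBasis_repr, hcoeff]
        norm_num
      rwa [this] at hs
  -- haar integral vs interval integral
  have haar_int : ∀ F : C(AddCircle L, ℂ),
      ∫ t, ‖F t‖ ^ 2 ∂AddCircle.haarAddCircle = (1 / L) * ∫ x in (0:ℝ)..L, ‖F ↑x‖ ^ 2 := by
    intro F
    have h1 : (∫ x in (0:ℝ)..(0 + L), ‖F ↑x‖ ^ 2) = ∫ b, ‖F b‖ ^ 2 :=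
      AddCircle.intervalIntegral_preimage L 0 (fun b => ‖F b‖ ^ 2)
    rw [zero_add] at h1
    have h2 : (∫ b, ‖F b‖ ^ 2) = L * ∫ t, ‖F t‖ ^ 2 ∂AddCircle.haarAddCircle := by
      rw [AddCircle.volume_eq_smul_haarAddCircle, MeasureTheory.integral_smul_measure,
        ENNReal.toReal_ofReal hL.le, smul_eq_mul]
    rw [← h1, h2] at *
    field_simp
  -- assemble Parseval identities for v and deriv v
  have hGcoe : ∀ n : ℤ, fourierCoeff (⇑G) n = fourierCoeffOn hL v n := by
    intro n; rw [hG]; exact bridge v hP hgc n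
  have hG'coe : ∀ n : ℤ, fourierCoeff (⇑G') n = fourierCoeffOn hL (deriv v) n := by
    intro n; rw [hG']; exact bridge (deriv v) hP' hg'c n
  obtain ⟨PG, SG⟩ := pars G
  obtain ⟨PG', SG'⟩ := pars G'
  simp_rw [hGcoe] at PG SG
  simp_rw [hG'coe] at PG' SG'
  rw [haar_int G] at PG
  rw [haar_int G'] at PG'
  have hGv : (∫ x in (0:ℝ)..L, ‖(G : AddCircle L → ℂ) ↑x‖ ^ 2) = ∫ x in (0:ℝ)..L, ‖v x‖ ^ 2 := by
    apply intervalIntegral.integral_congr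
    intro x _
    rw [hG]; simp only [ContinuousMap.coe_mk]; rw [hP.lift_coe]
  have hG'v : (∫ x in (0:ℝ)..L, ‖(G' : AddCircle L → ℂ) ↑x‖ ^ 2)
      = ∫ x in (0:ℝ)..L, ‖deriv v x‖ ^ 2 := by
    apply intervalIntegral.integral_congr
    intro x _
    rw [hG']; simp only [ContinuousMap.coe_mk]; rw [hP'.lift_coe]
  rw [hGv] at PG
  rw [hG'v] at PG'
  -- pointwise squared inequality and summation
  have hκnn : (0:ℝ) ≤ 2 * Real.pi / L := by positivity
  have ptwise : ∀ n : ℤ, (2 * Real.pi / L) ^ 2 * ‖fourierCoeffOn hL v n‖ ^ 2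
      ≤ ‖fourierCoeffOn hL (deriv v) n‖ ^ 2 := by
    intro n
    have h := coeffineq n
    have h2 := mul_le_mul h h (mul_nonneg hκnn (norm_nonneg _)) (norm_nonneg _)
    calc (2 * Real.pi / L) ^ 2 * ‖fourierCoeffOn hL v n‖ ^ 2
        = (2 * Real.pi / L * ‖fourierCoeffOn hL v n‖) *
          (2 * Real.pi / L * ‖fourierCoeffOn hL v n‖) := by ring
      _ ≤ ‖fourierCoeffOn hL (deriv v) n‖ * ‖fourierCoeffOn hL (deriv v) n‖ := h2
      _ = ‖fourierCoeffOn hL (deriv v) n‖ ^ 2 := by ring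
  have SL : Summable (fun n : ℤ => (2 * Real.pi / L) ^ 2 * ‖fourierCoeffOn hL v n‖ ^ 2) :=
    Summable.of_nonneg_of_le (fun n => by positivity) ptwise SG'
  have tle := Summable.tsum_le_tsum ptwise SL SG'
  rw [tsum_mul_left, PG, PG'] at tle
  -- clear the 1/L factors
  set Av := ∫ x in (0:ℝ)..L, ‖v x‖ ^ 2
  set Av' := ∫ x in (0:ℝ)..L, ‖deriv v x‖ ^ 2
  have : L * ((2 * Real.pi / L) ^ 2 * (1 / L * Av)) = (2 * Real.pi / L) ^ 2 * Av := by
    field_simp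
  calc (2 * Real.pi / L) ^ 2 * Av = L * ((2 * Real.pi / L) ^ 2 * (1 / L * Av)) := this.symm
    _ ≤ L * (1 / L * Av') := by
        apply mul_le_mul_of_nonneg_left tle hL.le
    _ = Av' := by field_simp


/-- The condition `b ≤ a·c`: under the hypotheses of Theorem 3.1,
for every mean-zero `C¹` `L`-periodic `v`,
`|∫₀^L δs·v|² ≤ (-∫₀^L s·|v|² + ∫₀^L |v'|²)·|⟨s⟩|`. -/
theorem stmt_10 (L : ℝ) (hL : 0 < L) (κ : ℝ) (hκ : κ = 2 * Real.pi / L)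
    (s : ℝ → ℝ) (hs_cont : Continuous s) (hs_per : ∀ x : ℝ, s (x + L) = s x)
    (sbar : ℝ) (hsbar : sbar = (1 / L) * ∫ x in (0:ℝ)..L, s x)
    (hsbar_neg : sbar ≤ 0)
    (s₀ : ℝ) (hs₀ : IsGreatest (s '' Set.Icc 0 L) s₀)
    (hs₀κ : s₀ ≤ κ ^ 2)
    (hfluct : (∫ x in (0:ℝ)..L, (s x - sbar) ^ 2) ≤ (κ ^ 2 - s₀) * |sbar|) :
    ∀ v : ℝ → ℂ, ContDiff ℝ 1 v → (∀ x : ℝ, v (x + L) = v x) →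
      (∫ x in (0:ℝ)..L, v x) = 0 →
      ‖∫ x in (0:ℝ)..L, ((s x - sbar : ℝ) : ℂ) * v x‖ ^ 2 ≤
        (-(∫ x in (0:ℝ)..L, s x * ‖v x‖ ^ 2) + ∫ x in (0:ℝ)..L, ‖deriv v x‖ ^ 2) *
          |sbar| := by
  intro v hv hvper hvmean
  have hvc : Continuous v := hv.continuous
  set Cv := ∫ x in (0:ℝ)..L, ‖v x‖ ^ 2 with hCv
  set Dv := ∫ x in (0:ℝ)..L, ‖deriv v x‖ ^ 2 with hDv
  have hCv0 : 0 ≤ Cv := intervalIntegral.integral_nonneg hL.le (fun u _ => sq_nonneg _)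
  -- Cauchy-Schwarz
  have hcs := myCS hL.le (fun x => s x - sbar) v (hs_cont.sub continuous_const) hvc
  -- Wirtinger
  have hwir := wirtinger hL v hv hvper hvmean
  rw [← hκ] at hwir
  -- s ≤ s₀ pointwise bound
  have hs_le : (∫ x in (0:ℝ)..L, s x * ‖v x‖ ^ 2) ≤ s₀ * Cv := by
    rw [hCv, ← intervalIntegral.integral_const_mul]
    apply intervalIntegral.integral_mono_on hL.le
    · exact (hs_cont.mul ((hvc.norm).pow 2)).intervalIntegrable 0 L
    · exact (continuous_const.mul ((hvc.norm).pow 2)).intervalIntegrable 0 L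
    · intro x hx
      exact mul_le_mul_of_nonneg_right (hs₀.2 ⟨x, hx, rfl⟩) (sq_nonneg _)
  -- combine
  have step1 : ‖∫ x in (0:ℝ)..L, ((s x - sbar : ℝ) : ℂ) * v x‖ ^ 2
      ≤ ((κ ^ 2 - s₀) * |sbar|) * Cv :=
    le_trans hcs (mul_le_mul_of_nonneg_right hfluct hCv0)
  have step2 : (κ ^ 2 - s₀) * Cv ≤ -(∫ x in (0:ℝ)..L, s x * ‖v x‖ ^ 2) + Dv := by
    nlinarith [hwir, hs_le]
  calc ‖∫ x in (0:ℝ)..L, ((s x - sbar : ℝ) : ℂ) * v x‖ ^ 2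
      ≤ ((κ ^ 2 - s₀) * |sbar|) * Cv := step1
    _ = ((κ ^ 2 - s₀) * Cv) * |sbar| := by ring
    _ ≤ (-(∫ x in (0:ℝ)..L, s x * ‖v x‖ ^ 2) + Dv) * |sbar| :=
        mul_le_mul_of_nonneg_right step2 (abs_nonneg _)
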